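/- Consider the fixed-point map M_α(x, μ, λ̃) = (x − α∇_x L(x,μ,λ̃), μ + α∇_μ L(x,μ,λ̃), (I−J)λ̃ + α∇_λ L(x,μ,λ̃)) where L(x,μ,λ) = F(x) + μ'h_bold(x) + λ'S_bold·x and J is the orthogonal projector onto Null(S_bold'). If (x*, μ*, λ*) with λ* ∈ Range(S_bold) satisfies the first-order conditions and ∇²_xx L(x*,μ*,λ*) ≻ 0, then the Jacobian of M_α at (x*,μ*,λ*) equals I − αB where B = [[∇²_xx L(x*,μ*,λ*), ∇h_bold(x*), S_bold'], [−∇h_bold(x*)', 0, 0], [−S_bold, 0, (1/α)J]], and there exists ᾱ > 0 such that for all α ∈ (0, ᾱ] the spectral radius of I − αB is strictly less than 1. -/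

import Mathlib

open Matrix

/-- The gradient vector of `g : (ι → ℝ) → ℝ` at `x`. -/
noncomputable def gradVec {ι : Type*} [Fintype ι] [DecidableEq ι]
    (g : (ι → ℝ) → ℝ) (x : ι → ℝ) : ι → ℝ :=
  fun p => fderiv ℝ g x (Pi.single p 1)

/-- The Hessian matrix of `g : (ι → ℝ) → ℝ` at `x`. -/
noncomputable def hessMat {ι : Type*} [Fintype ι] [DecidableEq ι]
    (g : (ι → ℝ) → ℝ) (x : ι → ℝ) : Matrix ι ι ℝ :=
  Matrix.of fun p r => fderiv ℝ (fun y => fderiv ℝ g y (Pi.single r 1)) x (Pi.single p 1)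

section Helpers

lemma dot_re {m' : Type*} [Fintype m'] (H : Matrix m' m' ℝ) (x : m' → ℂ) (a b : m' → ℝ)
    (ha : a = fun i => (x i).re) (hb : b = fun i => (x i).im) :
    (star x ⬝ᵥ (H.map Complex.ofReal *ᵥ x)).re = a ⬝ᵥ (H *ᵥ a) + b ⬝ᵥ (H *ᵥ b) := by
  unfold dotProduct Matrix.mulVec dotProduct
  simp only [Matrix.map_apply, Pi.star_apply, RCLike.star_def, Complex.re_sum, Finset.mul_sum,
    ← Finset.sum_add_distrib]
  refine Finset.sum_congr rfl fun i _ => ?_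
  refine Finset.sum_congr rfl fun j _ => ?_
  simp only [Complex.mul_re, Complex.mul_im, Complex.ofReal_re, Complex.ofReal_im, ha, hb,
    Complex.conj_re, Complex.conj_im]
  ring

lemma posdef_complex_re {m' : Type*} [Fintype m'] (H : Matrix m' m' ℝ) (hH : H.PosDef)
    (x : m' → ℂ) (hx : x ≠ 0) :
    0 < (star x ⬝ᵥ (H.map Complex.ofReal *ᵥ x)).re := by
  rw [dot_re H x _ _ rfl rfl]
  have hab : (fun i => (x i).re) ≠ 0 ∨ (fun i => (x i).im) ≠ 0 := by
    by_contra h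
    push_neg at h
    exact hx (funext fun i => Complex.ext (congrFun h.1 i) (congrFun h.2 i))
  have hsa : 0 ≤ (fun i => (x i).re) ⬝ᵥ (H *ᵥ fun i => (x i).re) := by
    simpa using hH.posSemidef.dotProduct_mulVec_nonneg (fun i => (x i).re)
  have hsb : 0 ≤ (fun i => (x i).im) ⬝ᵥ (H *ᵥ fun i => (x i).im) := by
    simpa using hH.posSemidef.dotProduct_mulVec_nonneg (fun i => (x i).im)
  rcases hab with h | h
  · have := hH.dotProduct_mulVec_pos h
    simp only [star_trivial] at this
    linarith
  · have := hH.dotProduct_mulVec_pos h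
    simp only [star_trivial] at this
    linarith

lemma eigRe {m' n' : Type*} [Fintype m'] [Fintype n']
    (H : Matrix m' m' ℝ) (E : Matrix m' n' ℝ)
    (γ : ℂ) (x : m' → ℂ) (y : n' → ℂ) (hx : x ≠ 0)
    (hpos : 0 < (star x ⬝ᵥ (H.map Complex.ofReal *ᵥ x)).re)
    (h1 : H.map Complex.ofReal *ᵥ x + E.map Complex.ofReal *ᵥ y = γ • x)
    (h2 : -(Eᵀ.map Complex.ofReal *ᵥ x) = γ • y) :
    0 < γ.re := by
  have d1 := congrArg (fun z => star x ⬝ᵥ z) h1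
  have d2 := congrArg (fun z => star y ⬝ᵥ z) h2
  simp only [dotProduct_add, dotProduct_smul, dotProduct_neg, smul_eq_mul] at d1 d2
  have fub : star y ⬝ᵥ ((Eᵀ.map Complex.ofReal) *ᵥ x)
      = (starRingEnd ℂ) (star x ⬝ᵥ (E.map Complex.ofReal *ᵥ y)) := by
    unfold dotProduct Matrix.mulVec dotProduct
    simp only [map_sum, _root_.map_mul, Complex.conj_conj, Complex.conj_ofReal, Matrix.map_apply,
      Matrix.transpose_apply, Pi.star_apply, RCLike.star_def, Finset.mul_sum]
    rw [Finset.sum_comm]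
    refine Finset.sum_congr rfl fun j _ => Finset.sum_congr rfl fun p _ => by ring
  set Sr : ℝ := (∑ i, Complex.normSq (x i)) + ∑ j, Complex.normSq (y j) with hSr
  have hS : star x ⬝ᵥ x + star y ⬝ᵥ y = (Sr : ℂ) := by
    unfold dotProduct
    rw [hSr]
    push_cast [Complex.normSq_eq_conj_mul_self]
    simp only [Pi.star_apply, RCLike.star_def]
  have hcomb : star x ⬝ᵥ (H.map Complex.ofReal *ᵥ x)
      + (star x ⬝ᵥ (E.map Complex.ofReal *ᵥ y)
        - (starRingEnd ℂ) (star x ⬝ᵥ (E.map Complex.ofReal *ᵥ y)))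
      = γ * (Sr : ℂ) := by
    rw [← hS, ← fub, mul_add, ← d1, ← d2]
    ring
  have hre := congrArg Complex.re hcomb
  simp only [Complex.add_re, Complex.sub_re, Complex.conj_re, sub_self, add_zero,
    Complex.mul_re, Complex.ofReal_re, Complex.ofReal_im, mul_zero, sub_zero] at hre
  have hSrpos : 0 < Sr := by
    have h1' : 0 < ∑ i, Complex.normSq (x i) := by
      obtain ⟨i, hi⟩ : ∃ i, x i ≠ 0 := by
        by_contra h; push_neg at h; exact hx (funext h)
      exact Finset.sum_pos' (fun i _ => Complex.normSq_nonneg _)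
        ⟨i, Finset.mem_univ i, Complex.normSq_pos.mpr hi⟩
    have h2' : 0 ≤ ∑ j, Complex.normSq (y j) :=
      Finset.sum_nonneg fun j _ => Complex.normSq_nonneg _
    rw [hSr]; linarith
  nlinarith [hre, hpos]

noncomputable def linDot {m q : ℕ} (lams : Fin q → ℝ) (Sb : Matrix (Fin q) (Fin m) ℝ) :
    (Fin m → ℝ) →L[ℝ] ℝ :=
  LinearMap.toContinuousLinearMap
    { toFun := fun y => lams ⬝ᵥ (Sb *ᵥ y)
      map_add' := fun a b => by
        rw [Matrix.mulVec_add, dotProduct_add]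
      map_smul' := fun c a => by
        rw [Matrix.mulVec_smul, dotProduct_smul]; rfl }

lemma grad_comp_deriv {m : ℕ} (g : (Fin m → ℝ) → ℝ) (hg : ContDiff ℝ 2 g)
    (x : Fin m → ℝ) (r : Fin m) :
    HasFDerivAt (fun y => fderiv ℝ g y (Pi.single r 1))
      ((ContinuousLinearMap.apply ℝ ℝ (Pi.single r 1 : Fin m → ℝ)).comp
        (fderiv ℝ (fderiv ℝ g) x)) x := by
  have h1 : ContDiff ℝ 1 (fderiv ℝ g) := hg.fderiv_right (by norm_num)
  exact (ContinuousLinearMap.apply ℝ ℝ (Pi.single r 1 : Fin m → ℝ)).hasFDerivAt.comp x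
    ((h1.differentiable (by norm_num)) x).hasFDerivAt

lemma hessMat_eq {m : ℕ} (g : (Fin m → ℝ) → ℝ) (hg : ContDiff ℝ 2 g)
    (x : Fin m → ℝ) (p r : Fin m) :
    hessMat g x p r = fderiv ℝ (fderiv ℝ g) x (Pi.single p 1) (Pi.single r 1) := by
  have h := (grad_comp_deriv g hg x r).fderiv
  show fderiv ℝ (fun y => fderiv ℝ g y (Pi.single r 1)) x (Pi.single p 1) = _
  rw [h]; rfl

lemma clm_apply_sum {m : ℕ} {M : Type*} [AddCommGroup M] [Module ℝ M] [TopologicalSpace M]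
    (L : (Fin m → ℝ) →L[ℝ] M) (d : Fin m → ℝ) :
    L d = ∑ s, d s • L (Pi.single s 1) := by
  have hd : d = ∑ s, d s • (Pi.single s 1 : Fin m → ℝ) := by
    conv_lhs => rw [← Finset.univ_sum_single d]
    refine Finset.sum_congr rfl fun s _ => ?_
    rw [← Pi.single_smul s (d s) 1, smul_eq_mul, mul_one]
  conv_lhs => rw [hd]
  rw [map_sum]
  exact Finset.sum_congr rfl fun s _ => by rw [_root_.map_smul]

lemma snd_deriv_sum {m : ℕ} (g : (Fin m → ℝ) → ℝ) (hg : ContDiff ℝ 2 g)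
    (x : Fin m → ℝ) (d : Fin m → ℝ) (r : Fin m) :
    fderiv ℝ (fderiv ℝ g) x d (Pi.single r 1) = ∑ s, d s * hessMat g x s r := by
  rw [clm_apply_sum (fderiv ℝ (fderiv ℝ g) x) d, ContinuousLinearMap.sum_apply]
  refine Finset.sum_congr rfl fun s _ => ?_
  rw [ContinuousLinearMap.smul_apply, smul_eq_mul, hessMat_eq g hg x s r]

lemma fderiv_apply_sum {m : ℕ} (g : (Fin m → ℝ) → ℝ) (hg : ContDiff ℝ 2 g)
    (x : Fin m → ℝ) (d : Fin m → ℝ) :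
    fderiv ℝ g x d = ∑ s, d s * gradVec g x s := by
  rw [clm_apply_sum (fderiv ℝ g x) d]
  exact Finset.sum_congr rfl fun s _ => by rw [smul_eq_mul]; rfl

lemma inner_fderiv_lagr {m N q : ℕ} (F : (Fin m → ℝ) → ℝ) (hb : Fin N → (Fin m → ℝ) → ℝ)
    (hF : ContDiff ℝ 2 F) (hhb : ∀ i, ContDiff ℝ 2 (hb i))
    (μs : Fin N → ℝ) (lams : Fin q → ℝ) (Sb : Matrix (Fin q) (Fin m) ℝ)
    (y : Fin m → ℝ) :
    fderiv ℝ (fun x => F x + ∑ i, μs i * hb i x + lams ⬝ᵥ (Sb *ᵥ x)) y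
      = fderiv ℝ F y + (∑ i, μs i • fderiv ℝ (hb i) y) + linDot lams Sb := by
  have hasF : HasFDerivAt F (fderiv ℝ F y) y :=
    (hF.differentiable (by norm_num) y).hasFDerivAt
  have hsum : HasFDerivAt (fun x => ∑ i, μs i * hb i x)
      (∑ i, μs i • fderiv ℝ (hb i) y) y :=
    HasFDerivAt.fun_sum fun i _ =>
      (((hhb i).differentiable (by norm_num) y).hasFDerivAt).const_mul (μs i)
  have hlin : HasFDerivAt (fun x => lams ⬝ᵥ (Sb *ᵥ x)) (linDot lams Sb) y :=
    (linDot lams Sb).hasFDerivAt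
  exact ((hasF.add hsum).add hlin).fderiv

lemma hess_lagr {m N q : ℕ} (F : (Fin m → ℝ) → ℝ) (hb : Fin N → (Fin m → ℝ) → ℝ)
    (hF : ContDiff ℝ 2 F) (hhb : ∀ i, ContDiff ℝ 2 (hb i))
    (μs : Fin N → ℝ) (lams : Fin q → ℝ) (Sb : Matrix (Fin q) (Fin m) ℝ)
    (xs : Fin m → ℝ) (p r : Fin m) :
    hessMat (fun x => F x + ∑ i, μs i * hb i x + lams ⬝ᵥ (Sb *ᵥ x)) xs p r
      = hessMat F xs p r + ∑ i, μs i * hessMat (hb i) xs p r := by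
  have hfun : (fun y => fderiv ℝ (fun x => F x + ∑ i, μs i * hb i x + lams ⬝ᵥ (Sb *ᵥ x)) y
        (Pi.single r 1))
      = fun y => fderiv ℝ F y (Pi.single r 1)
        + ((∑ i, μs i * fderiv ℝ (hb i) y (Pi.single r 1))
        + linDot lams Sb (Pi.single r 1)) := by
    funext y
    rw [inner_fderiv_lagr F hb hF hhb μs lams Sb y]
    simp [Finset.sum_apply]
    ring
  show fderiv ℝ (fun y => fderiv ℝ (fun x => F x + ∑ i, μs i * hb i x + lams ⬝ᵥ (Sb *ᵥ x)) y
      (Pi.single r 1)) xs (Pi.single p 1) = _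
  rw [hfun]
  have h1 := grad_comp_deriv F hF xs r
  have h2 : HasFDerivAt (fun y => (∑ i, μs i * fderiv ℝ (hb i) y (Pi.single r 1))
        + linDot lams Sb (Pi.single r 1))
      (∑ i, μs i • ((ContinuousLinearMap.apply ℝ ℝ (Pi.single r 1 : Fin m → ℝ)).comp
        (fderiv ℝ (fderiv ℝ (hb i)) xs))) xs :=
    (HasFDerivAt.fun_sum fun i _ =>
      (grad_comp_deriv (hb i) (hhb i) xs r).const_mul (μs i)).add_const _
  rw [(h1.fun_add h2).fderiv]
  simp only [ContinuousLinearMap.add_apply, ContinuousLinearMap.coe_sum', Finset.sum_apply,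
    ContinuousLinearMap.coe_smul', Pi.smul_apply, ContinuousLinearMap.coe_comp',
    Function.comp_apply, ContinuousLinearMap.apply_apply, smul_eq_mul]
  rw [hessMat_eq F hF xs p r]
  refine congrArg _ (Finset.sum_congr rfl fun i _ => ?_)
  rw [hessMat_eq (hb i) (hhb i) xs p r]

/-- projection onto the `x`-block as a continuous linear map -/
noncomputable def projL (m N q : ℕ) : ((Fin m ⊕ (Fin N ⊕ Fin q)) → ℝ) →L[ℝ] (Fin m → ℝ) :=
  LinearMap.toContinuousLinearMap
    { toFun := fun z r => z (Sum.inl r)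
      map_add' := fun _ _ => rfl
      map_smul' := fun _ _ => rfl }

/-- `z ↦ (Sbᵀ *ᵥ (z ∘ inr ∘ inr)) p` as a continuous linear map -/
noncomputable def rowS {m q : ℕ} (N : ℕ) (Sb : Matrix (Fin q) (Fin m) ℝ) (p : Fin m) :
    ((Fin m ⊕ (Fin N ⊕ Fin q)) → ℝ) →L[ℝ] ℝ :=
  LinearMap.toContinuousLinearMap
    { toFun := fun z => (Sbᵀ *ᵥ fun k => z (Sum.inr (Sum.inr k))) p
      map_add' := fun a b => by
        show (Sbᵀ *ᵥ ((fun k => a (Sum.inr (Sum.inr k))) + fun k => b (Sum.inr (Sum.inr k)))) p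
          = _
        rw [Matrix.mulVec_add]; rfl
      map_smul' := fun c a => by
        show (Sbᵀ *ᵥ (c • fun k => a (Sum.inr (Sum.inr k)))) p = _
        rw [Matrix.mulVec_smul]; rfl }

/-- the last block row of the fixed-point map, as a continuous linear map -/
noncomputable def rowJ {m q : ℕ} (N : ℕ) (Sb : Matrix (Fin q) (Fin m) ℝ) (J : Matrix (Fin q) (Fin q) ℝ)
    (α : ℝ) (k : Fin q) :
    ((Fin m ⊕ (Fin N ⊕ Fin q)) → ℝ) →L[ℝ] ℝ :=
  LinearMap.toContinuousLinearMap
    { toFun := fun z => (((1 : Matrix (Fin q) (Fin q) ℝ) - J) *ᵥ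
          fun k' => z (Sum.inr (Sum.inr k'))) k
        + α * (Sb *ᵥ fun r => z (Sum.inl r)) k
      map_add' := fun a b => by
        show (((1 : Matrix (Fin q) (Fin q) ℝ) - J) *ᵥ
            ((fun k' => a (Sum.inr (Sum.inr k'))) + fun k' => b (Sum.inr (Sum.inr k')))) k
          + α * ((Sb *ᵥ ((fun r => a (Sum.inl r)) + fun r => b (Sum.inl r))) k) = _
        rw [Matrix.mulVec_add, Matrix.mulVec_add]
        simp only [Pi.add_apply]
        ring
      map_smul' := fun c a => by
        show (((1 : Matrix (Fin q) (Fin q) ℝ) - J) *ᵥ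
            (c • fun k' => a (Sum.inr (Sum.inr k')))) k
          + α * ((Sb *ᵥ (c • fun r => a (Sum.inl r))) k) = _
        rw [Matrix.mulVec_smul, Matrix.mulVec_smul]
        simp only [Pi.smul_apply, smul_eq_mul, RingHom.id_apply]
        ring }

lemma map_ofReal_mul {l n o : Type*} [Fintype n] (A : Matrix l n ℝ) (B : Matrix n o ℝ) :
    (A * B).map Complex.ofReal = A.map Complex.ofReal * B.map Complex.ofReal := by
  ext i j
  simp only [Matrix.map_apply, Matrix.mul_apply]
  push_cast
  rfl

end Helpers

set_option maxHeartbeats 2000000 in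
theorem stmt14 (m N q : ℕ)
    (F : (Fin m → ℝ) → ℝ) (hb : Fin N → (Fin m → ℝ) → ℝ)
    (hF : ContDiff ℝ 2 F) (hhb : ∀ i, ContDiff ℝ 2 (hb i))
    (Sb : Matrix (Fin q) (Fin m) ℝ) (J : Matrix (Fin q) (Fin q) ℝ)
    (hJsym : Jᵀ = J) (hJidem : J * J = J)
    (hJmem : ∀ w : Fin q → ℝ, Sbᵀ *ᵥ (J *ᵥ w) = 0)
    (hJfix : ∀ w : Fin q → ℝ, Sbᵀ *ᵥ w = 0 → J *ᵥ w = w)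
    (xs : Fin m → ℝ) (μs : Fin N → ℝ) (lams : Fin q → ℝ)
    (hlams : lams ∈ LinearMap.range Sb.mulVecLin)
    (hstat : gradVec F xs + (∑ i, μs i • gradVec (hb i) xs) + Sbᵀ *ᵥ lams = 0)
    (hfeas1 : ∀ i, hb i xs = 0) (hfeas2 : Sb *ᵥ xs = 0)
    (Hess : Matrix (Fin m) (Fin m) ℝ)
    (hHess : Hess = hessMat
      (fun x => F x + ∑ i, μs i * hb i x + lams ⬝ᵥ (Sb *ᵥ x)) xs)
    (hpd : Hess.PosDef)
    (hnull : ∀ (u : Fin N → ℝ) (v : Fin q → ℝ),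
      (∑ i, u i • gradVec (hb i) xs) + Sbᵀ *ᵥ v = 0 → u = 0 ∧ Sbᵀ *ᵥ v = 0)
    (Mα : ℝ → ((Fin m ⊕ (Fin N ⊕ Fin q)) → ℝ) → ((Fin m ⊕ (Fin N ⊕ Fin q)) → ℝ))
    (hM : ∀ α z, Mα α z = Sum.elim
      (fun p => z (Sum.inl p) - α *
        (gradVec F (fun r => z (Sum.inl r)) p
          + (∑ i, z (Sum.inr (Sum.inl i)) * gradVec (hb i) (fun r => z (Sum.inl r)) p)
          + (Sbᵀ *ᵥ fun k => z (Sum.inr (Sum.inr k))) p))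
      (Sum.elim
        (fun i => z (Sum.inr (Sum.inl i)) + α * hb i (fun r => z (Sum.inl r)))
        (fun k => (((1 : Matrix (Fin q) (Fin q) ℝ) - J) *ᵥ
            fun k' => z (Sum.inr (Sum.inr k'))) k
          + α * (Sb *ᵥ fun r => z (Sum.inl r)) k)))
    (B : ℝ → Matrix (Fin m ⊕ (Fin N ⊕ Fin q)) (Fin m ⊕ (Fin N ⊕ Fin q)) ℝ)
    (hB : ∀ α, B α = Matrix.fromBlocks Hess
      (Matrix.fromCols (Matrix.of fun p i => gradVec (hb i) xs p) Sbᵀ)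
      (Matrix.fromRows (-(Matrix.of fun i p => gradVec (hb i) xs p)) (-Sb))
      (Matrix.fromBlocks 0 0 0 (α⁻¹ • J)))
    (zs : (Fin m ⊕ (Fin N ⊕ Fin q)) → ℝ)
    (hzs : zs = Sum.elim xs (Sum.elim μs lams)) :
    (∀ α : ℝ, 0 < α →
      (fderiv ℝ (Mα α) zs : ((Fin m ⊕ (Fin N ⊕ Fin q)) → ℝ) →ₗ[ℝ]
          ((Fin m ⊕ (Fin N ⊕ Fin q)) → ℝ))
        = ((1 : Matrix (Fin m ⊕ (Fin N ⊕ Fin q)) (Fin m ⊕ (Fin N ⊕ Fin q)) ℝ)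
            - α • B α).mulVecLin) ∧
    (∃ αbar > (0 : ℝ), ∀ α : ℝ, 0 < α → α ≤ αbar →
      ∀ (β : ℂ) (v : Fin m ⊕ (Fin N ⊕ Fin q) → ℂ), v ≠ 0 →
        (((1 : Matrix (Fin m ⊕ (Fin N ⊕ Fin q)) (Fin m ⊕ (Fin N ⊕ Fin q)) ℝ)
            - α • B α).map Complex.ofReal) *ᵥ v = β • v →
        ‖β‖ < 1) := by
  subst hzs
  have hπ : (projL m N q) (Sum.elim xs (Sum.elim μs lams)) = xs := rfl
  have hsymm : ∀ a b, Hess a b = Hess b a := by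
    intro a b
    conv_lhs => rw [← hpd.1]
    rfl
  constructor
  · -- Part 1 : the Jacobian
    intro α hα
    have hα0 : α ≠ 0 := ne_of_gt hα
    -- matrix-side evaluation lemmas
    have mv : ∀ (d : (Fin m ⊕ (Fin N ⊕ Fin q)) → ℝ) j,
        ((1 - α • B α) *ᵥ d) j = d j - α * ((B α *ᵥ d) j) := by
      intro d j
      rw [Matrix.sub_mulVec, Matrix.smul_mulVec, Matrix.one_mulVec]
      simp [Pi.sub_apply]
    have bv1 : ∀ (d : (Fin m ⊕ (Fin N ⊕ Fin q)) → ℝ) p,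
        (B α *ᵥ d) (Sum.inl p) = (∑ r, Hess p r * d (Sum.inl r))
          + ((∑ i, gradVec (hb i) xs p * d (Sum.inr (Sum.inl i)))
            + (∑ k, Sbᵀ p k * d (Sum.inr (Sum.inr k)))) := by
      intro d p
      rw [hB]
      show ∑ j, _ * d j = _
      simp only [Fintype.sum_sum_type, Matrix.fromBlocks_apply₁₁, Matrix.fromBlocks_apply₁₂,
        Matrix.fromCols_apply_inl, Matrix.fromCols_apply_inr, Matrix.of_apply]
    have bv2 : ∀ (d : (Fin m ⊕ (Fin N ⊕ Fin q)) → ℝ) i,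
        (B α *ᵥ d) (Sum.inr (Sum.inl i)) = -∑ r, gradVec (hb i) xs r * d (Sum.inl r) := by
      intro d i
      rw [hB]
      show ∑ j, _ * d j = _
      simp only [Fintype.sum_sum_type, Matrix.fromBlocks_apply₂₁, Matrix.fromBlocks_apply₂₂,
        Matrix.fromBlocks_apply₁₁, Matrix.fromBlocks_apply₁₂, Matrix.fromRows_apply_inl,
        Matrix.of_apply, Matrix.neg_apply, Matrix.zero_apply, zero_mul, Finset.sum_const_zero,
        add_zero, neg_mul, Finset.sum_neg_distrib]
    have bv3 : ∀ (d : (Fin m ⊕ (Fin N ⊕ Fin q)) → ℝ) k,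
        (B α *ᵥ d) (Sum.inr (Sum.inr k)) = (-∑ r, Sb k r * d (Sum.inl r))
          + α⁻¹ * ∑ k', J k k' * d (Sum.inr (Sum.inr k')) := by
      intro d k
      rw [hB]
      show ∑ j, _ * d j = _
      simp only [Fintype.sum_sum_type, Matrix.fromBlocks_apply₂₁, Matrix.fromBlocks_apply₂₂,
        Matrix.fromBlocks_apply₁₁, Matrix.fromBlocks_apply₁₂, Matrix.fromRows_apply_inr,
        Matrix.of_apply, Matrix.neg_apply, Matrix.zero_apply, zero_mul, Finset.sum_const_zero,
        zero_add, neg_mul, Finset.sum_neg_distrib, Matrix.smul_apply, smul_eq_mul,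
        Finset.mul_sum]
      ring_nf
    -- the key HasFDerivAt statement
    have hkey : HasFDerivAt (Mα α)
        (LinearMap.toContinuousLinearMap
          (Matrix.mulVecLin ((1 : Matrix (Fin m ⊕ (Fin N ⊕ Fin q))
            (Fin m ⊕ (Fin N ⊕ Fin q)) ℝ) - α • B α))) (Sum.elim xs (Sum.elim μs lams)) := by
      rw [funext (hM α), hasFDerivAt_pi']
      intro j
      rcases j with p | i | k
      · -- x-component
        have grad1 : HasFDerivAt (fun y => fderiv ℝ F y (Pi.single p 1))
            ((ContinuousLinearMap.apply ℝ ℝ (Pi.single p 1 : Fin m → ℝ)).comp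
              (fderiv ℝ (fderiv ℝ F) xs)) ((projL m N q) (Sum.elim xs (Sum.elim μs lams))) := by
          rw [hπ]; exact grad_comp_deriv F hF xs p
        have h1 := grad1.comp (Sum.elim xs (Sum.elim μs lams)) (projL m N q).hasFDerivAt
        have h2 : ∀ i, HasFDerivAt
            (fun z : (Fin m ⊕ (Fin N ⊕ Fin q)) → ℝ =>
              z (Sum.inr (Sum.inl i)) * fderiv ℝ (hb i) ((projL m N q) z) (Pi.single p 1))
            ((Sum.elim xs (Sum.elim μs lams)) (Sum.inr (Sum.inl i)) •
                (((ContinuousLinearMap.apply ℝ ℝ (Pi.single p 1 : Fin m → ℝ)).comp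
                  (fderiv ℝ (fderiv ℝ (hb i)) xs)).comp (projL m N q))
              + fderiv ℝ (hb i) ((projL m N q) (Sum.elim xs (Sum.elim μs lams)))
                  (Pi.single p 1) • ContinuousLinearMap.proj (Sum.inr (Sum.inl i)))
            (Sum.elim xs (Sum.elim μs lams)) := by
          intro i
          have gradi : HasFDerivAt (fun y => fderiv ℝ (hb i) y (Pi.single p 1))
              ((ContinuousLinearMap.apply ℝ ℝ (Pi.single p 1 : Fin m → ℝ)).comp
                (fderiv ℝ (fderiv ℝ (hb i)) xs))
              ((projL m N q) (Sum.elim xs (Sum.elim μs lams))) := by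
            rw [hπ]; exact grad_comp_deriv (hb i) (hhb i) xs p
          exact (hasFDerivAt_apply (Sum.inr (Sum.inl i)) _).mul
            (gradi.comp (Sum.elim xs (Sum.elim μs lams)) (projL m N q).hasFDerivAt)
        have h3 := (rowS N Sb p).hasFDerivAt (x := Sum.elim xs (Sum.elim μs lams))
        have core := (h1.add (HasFDerivAt.fun_sum (fun i (_ : i ∈ Finset.univ) => h2 i))).add h3
        have full := (hasFDerivAt_apply (Sum.inl p) (Sum.elim xs (Sum.elim μs lams))).sub
          (core.const_mul α)
        refine full.congr_fderiv ?_
        ext d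
        simp only [ContinuousLinearMap.coe_sub', Pi.sub_apply, ContinuousLinearMap.proj_apply,
          ContinuousLinearMap.coe_smul', Pi.smul_apply, ContinuousLinearMap.add_apply,
          ContinuousLinearMap.coe_comp', Function.comp_apply,
          ContinuousLinearMap.apply_apply, ContinuousLinearMap.coe_sum', Finset.sum_apply,
          smul_eq_mul, LinearMap.coe_toContinuousLinearMap', Matrix.mulVecLin_apply]
        rw [mv d (Sum.inl p), bv1 d p]
        have hessstep : fderiv ℝ (fderiv ℝ F) xs ((projL m N q) d) (Pi.single p 1)
            + ∑ i, μs i * fderiv ℝ (fderiv ℝ (hb i)) xs ((projL m N q) d) (Pi.single p 1)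
            = ∑ r, Hess p r * d (Sum.inl r) := by
          rw [snd_deriv_sum F hF xs _ p]
          have hi : ∀ i, μs i * fderiv ℝ (fderiv ℝ (hb i)) xs ((projL m N q) d) (Pi.single p 1)
              = ∑ s, (projL m N q) d s * (μs i * hessMat (hb i) xs s p) := by
            intro i
            rw [snd_deriv_sum (hb i) (hhb i) xs _ p, Finset.mul_sum]
            exact Finset.sum_congr rfl fun s _ => by ring
          rw [Finset.sum_congr rfl fun i _ => hi i, Finset.sum_comm, ← Finset.sum_add_distrib]
          refine Finset.sum_congr rfl fun s _ => ?_
          rw [← Finset.mul_sum, ← mul_add]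
          rw [show hessMat F xs s p + ∑ i, μs i * hessMat (hb i) xs s p
              = Hess s p by rw [hHess]; exact (hess_lagr F hb hF hhb μs lams Sb xs s p).symm]
          rw [hsymm s p, mul_comm]
          rfl
        rw [← hessstep]
        have hzsval : ∀ i, (Sum.elim xs (Sum.elim μs lams) : (Fin m ⊕ (Fin N ⊕ Fin q)) → ℝ)
            (Sum.inr (Sum.inl i)) = μs i := fun i => rfl
        have hgval : ∀ i, fderiv ℝ (hb i) ((projL m N q) (Sum.elim xs (Sum.elim μs lams)))
            (Pi.single p 1) = gradVec (hb i) xs p := fun i => rfl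
        simp only [hzsval, hgval]
        rw [Finset.sum_add_distrib]
        have hrowS : (rowS N Sb p) d = ∑ k, Sbᵀ p k * d (Sum.inr (Sum.inr k)) := rfl
        rw [hrowS]
        ring
      · -- μ-component
        have hdi : HasFDerivAt (fun z : (Fin m ⊕ (Fin N ⊕ Fin q)) → ℝ =>
              hb i ((projL m N q) z))
            ((fderiv ℝ (hb i) xs).comp (projL m N q)) (Sum.elim xs (Sum.elim μs lams)) := by
          have : HasFDerivAt (hb i) (fderiv ℝ (hb i) xs)
              ((projL m N q) (Sum.elim xs (Sum.elim μs lams))) := by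
            rw [hπ]
            exact (((hhb i).differentiable (by norm_num)) xs).hasFDerivAt
          exact this.comp _ (projL m N q).hasFDerivAt
        have full := (hasFDerivAt_apply (Sum.inr (Sum.inl i))
          (Sum.elim xs (Sum.elim μs lams))).add (hdi.const_mul α)
        refine full.congr_fderiv ?_
        ext d
        simp only [ContinuousLinearMap.coe_add', Pi.add_apply, ContinuousLinearMap.proj_apply,
          ContinuousLinearMap.coe_smul', Pi.smul_apply, ContinuousLinearMap.coe_comp',
          Function.comp_apply, smul_eq_mul,
          LinearMap.coe_toContinuousLinearMap', Matrix.mulVecLin_apply]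
        rw [mv d (Sum.inr (Sum.inl i)), bv2 d i]
        rw [fderiv_apply_sum (hb i) (hhb i) xs]
        have : ∀ s, (projL m N q) d s = d (Sum.inl s) := fun s => rfl
        simp only [this]
        rw [Finset.sum_congr rfl (fun r (_ : r ∈ Finset.univ) =>
          mul_comm (d (Sum.inl r)) (gradVec (hb i) xs r))]
        ring
      · -- λ-component
        have full := (rowJ N Sb J α k).hasFDerivAt (x := Sum.elim xs (Sum.elim μs lams))
        refine full.congr_fderiv ?_
        ext d
        simp only [LinearMap.coe_toContinuousLinearMap', Matrix.mulVecLin_apply,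
          ContinuousLinearMap.coe_comp', Function.comp_apply, ContinuousLinearMap.proj_apply]
        rw [mv d (Sum.inr (Sum.inr k)), bv3 d k]
        have hrowJ : (rowJ N Sb J α k) d = (∑ k', ((1 : Matrix (Fin q) (Fin q) ℝ) - J) k k'
            * d (Sum.inr (Sum.inr k'))) + α * ∑ r, Sb k r * d (Sum.inl r) := rfl
        rw [hrowJ]
        have hone : ∀ k', ((1 : Matrix (Fin q) (Fin q) ℝ) - J) k k'
            = (if k = k' then (1:ℝ) else 0) - J k k' := by
          intro k'
          rw [Matrix.sub_apply, Matrix.one_apply]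
        simp only [hone, sub_mul, ite_mul, one_mul, zero_mul]
        rw [Finset.sum_sub_distrib, Finset.sum_ite_eq (Finset.univ) k
          (fun k' => d (Sum.inr (Sum.inr k')))]
        simp only [Finset.mem_univ, if_true]
        field_simp
        ring
    rw [hkey.fderiv]
    exact LinearMap.coe_toContinuousLinearMap _
  · -- Part 2 : spectral radius
    classical
    set A : Matrix (Fin m) (Fin N) ℝ := Matrix.of fun p i => gradVec (hb i) xs p with hA
    set E : Matrix (Fin m) (Fin N ⊕ Fin q) ℝ := Matrix.fromCols A Sbᵀ with hE
    set C : Matrix (Fin m ⊕ (Fin N ⊕ Fin q)) (Fin m ⊕ (Fin N ⊕ Fin q)) ℝ :=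
      Matrix.fromBlocks Hess E (-Eᵀ) 0 with hC
    set f : Module.End ℂ ((Fin m ⊕ (Fin N ⊕ Fin q)) → ℂ) :=
      (C.map Complex.ofReal).mulVecLin with hf
    have hfin : Set.Finite (Module.End.HasEigenvalue f) := Module.End.finite_hasEigenvalue f
    set s : Finset ℝ := insert 1 ((hfin.toFinset.filter fun μ => 0 < μ.re).image
      fun μ => μ.re / Complex.normSq μ) with hs
    have hsne : s.Nonempty := ⟨1, Finset.mem_insert_self 1 _⟩
    refine ⟨s.min' hsne, ?_, ?_⟩
    · show (0:ℝ) < s.min' hsne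
      rw [Finset.lt_min'_iff]
      intro b hbs
      rcases Finset.mem_insert.mp hbs with hb1 | hbim
      · rw [hb1]; norm_num
      · obtain ⟨μ, hμmem, hμeq⟩ := Finset.mem_image.mp hbim
        obtain ⟨_, hμre⟩ := Finset.mem_filter.mp hμmem
        have hμ0 : μ ≠ 0 := fun h => by rw [h] at hμre; simp at hμre
        rw [← hμeq]
        exact div_pos hμre (Complex.normSq_pos.mpr hμ0)
    · intro α hα hαle β v hv0 hveq
      by_cases hβ : β = 0
      · rw [hβ]; simp
      have hα0 : α ≠ 0 := ne_of_gt hα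
      have hαC : (α : ℂ) ≠ 0 := by exact_mod_cast hα0
      have hmap : ((1 : Matrix (Fin m ⊕ (Fin N ⊕ Fin q)) (Fin m ⊕ (Fin N ⊕ Fin q)) ℝ)
            - α • B α).map Complex.ofReal
          = 1 - (α : ℂ) • (B α).map Complex.ofReal := by
        ext j j'
        by_cases h : j = j' <;>
          simp [Matrix.map_apply, Matrix.sub_apply, Matrix.smul_apply, Matrix.one_apply, h] <;>
          push_cast <;> ring
      rw [hmap, Matrix.sub_mulVec, Matrix.smul_mulVec, Matrix.one_mulVec] at hveq
      set x : Fin m → ℂ := fun p => v (Sum.inl p) with hx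
      set u : Fin N → ℂ := fun i => v (Sum.inr (Sum.inl i)) with hu
      set w : Fin q → ℂ := fun k => v (Sum.inr (Sum.inr k)) with hw
      set γ : ℂ := (1 - β) / (α : ℂ) with hγ
      -- componentwise values of the complexified B-matrix
      have bc1 : ∀ p, ((B α).map Complex.ofReal *ᵥ v) (Sum.inl p)
          = (Hess.map Complex.ofReal *ᵥ x) p + ((A.map Complex.ofReal *ᵥ u) p
            + (Sbᵀ.map Complex.ofReal *ᵥ w) p) := by
        intro p
        rw [hB]
        show ∑ j, _ * v j = _
        unfold Matrix.mulVec dotProduct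
        simp only [Fintype.sum_sum_type, Matrix.map_apply, Matrix.fromBlocks_apply₁₁,
          Matrix.fromBlocks_apply₁₂, Matrix.fromCols_apply_inl, Matrix.fromCols_apply_inr,
          Matrix.of_apply]
        rfl
      have bc2 : ∀ i, ((B α).map Complex.ofReal *ᵥ v) (Sum.inr (Sum.inl i))
          = -((Aᵀ.map Complex.ofReal *ᵥ x) i) := by
        intro i
        rw [hB]
        show ∑ j, _ * v j = _
        unfold Matrix.mulVec dotProduct
        simp only [Fintype.sum_sum_type, Matrix.map_apply, Matrix.fromBlocks_apply₂₁,
          Matrix.fromBlocks_apply₂₂, Matrix.fromBlocks_apply₁₁, Matrix.fromBlocks_apply₁₂,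
          Matrix.fromRows_apply_inl, Matrix.of_apply, Matrix.neg_apply, Matrix.zero_apply,
          Complex.ofReal_zero, zero_mul, Finset.sum_const_zero, add_zero, Complex.ofReal_neg,
          neg_mul, Finset.sum_neg_distrib, Matrix.transpose_apply, hA, hx]
      have bc3 : ∀ k, ((B α).map Complex.ofReal *ᵥ v) (Sum.inr (Sum.inr k))
          = -((Sb.map Complex.ofReal *ᵥ x) k)
            + ((α : ℂ))⁻¹ * ((J.map Complex.ofReal *ᵥ w) k) := by
        intro k
        rw [hB]
        show ∑ j, _ * v j = _
        unfold Matrix.mulVec dotProduct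
        simp only [Fintype.sum_sum_type, Matrix.map_apply, Matrix.fromBlocks_apply₂₁,
          Matrix.fromBlocks_apply₂₂, Matrix.fromBlocks_apply₁₁, Matrix.fromBlocks_apply₁₂,
          Matrix.fromRows_apply_inr, Matrix.of_apply, Matrix.neg_apply, Matrix.zero_apply,
          Complex.ofReal_zero, zero_mul, Finset.sum_const_zero, zero_add, Complex.ofReal_neg,
          neg_mul, Finset.sum_neg_distrib, Matrix.smul_apply, smul_eq_mul, Complex.ofReal_mul,
          Complex.ofReal_inv, Finset.mul_sum, mul_assoc, hx, hw]
      -- the three (scalar) eigen-equations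
      have hcomp : ∀ j, v j - (α : ℂ) * (((B α).map Complex.ofReal *ᵥ v) j) = β * v j := by
        intro j
        have := congrFun hveq j
        simpa only [Pi.sub_apply, Pi.smul_apply, smul_eq_mul] using this
      have E1 : ∀ p, (Hess.map Complex.ofReal *ᵥ x) p + ((A.map Complex.ofReal *ᵥ u) p
          + (Sbᵀ.map Complex.ofReal *ᵥ w) p) = γ * x p := by
        intro p
        have hc := hcomp (Sum.inl p)
        rw [bc1 p] at hc
        rw [hγ, div_mul_eq_mul_div, eq_div_iff hαC]
        linear_combination -hc
      have E2 : ∀ i, -((Aᵀ.map Complex.ofReal *ᵥ x) i) = γ * u i := by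
        intro i
        have hc := hcomp (Sum.inr (Sum.inl i))
        rw [bc2 i] at hc
        rw [hγ, div_mul_eq_mul_div, eq_div_iff hαC]
        linear_combination -hc
      -- analysis of the λ-block
      have hJS : J * Sb = 0 := by
        have h0 : Sbᵀ * J = 0 := by
          ext i j'
          have h1 := congrFun (hJmem (Pi.single j' 1)) i
          rw [Matrix.mulVec_mulVec, Matrix.mulVec_single] at h1
          simpa using h1
        have := congrArg Matrix.transpose h0
        rw [Matrix.transpose_mul, hJsym, Matrix.transpose_transpose] at this
        simpa using this
      have ve3 : w + (α : ℂ) • (Sb.map Complex.ofReal *ᵥ x) - (J.map Complex.ofReal) *ᵥ w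
          = β • w := by
        funext k
        have hc := hcomp (Sum.inr (Sum.inr k))
        rw [bc3 k] at hc
        have hinv : (α : ℂ) * ((α : ℂ))⁻¹ = 1 := mul_inv_cancel₀ hαC
        simp only [Pi.sub_apply, Pi.add_apply, Pi.smul_apply, smul_eq_mul]
        linear_combination hc + ((J.map Complex.ofReal *ᵥ w) k) * hinv
      have hJw : (J.map Complex.ofReal) *ᵥ w = 0 := by
        have h2 := congrArg (fun z => (J.map Complex.ofReal) *ᵥ z) ve3
        simp only [Matrix.mulVec_add, Matrix.mulVec_sub, Matrix.mulVec_smul,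
          Matrix.mulVec_mulVec] at h2
        rw [← map_ofReal_mul J Sb, ← map_ofReal_mul J J, hJS, hJidem] at h2
        have hz : ((0 : Matrix (Fin q) (Fin m) ℝ).map Complex.ofReal) *ᵥ x = 0 := by
          have : (0 : Matrix (Fin q) (Fin m) ℝ).map Complex.ofReal = 0 := by
            ext i j; simp
          rw [this, Matrix.zero_mulVec]
        rw [hz] at h2
        simp only [smul_zero, add_zero, sub_self] at h2
        rcases smul_eq_zero.mp h2.symm with h | h
        · exact absurd h hβ
        · exact h
      have ve3' : (α : ℂ) • (Sb.map Complex.ofReal *ᵥ x) = (β - 1) • w := by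
        have := ve3
        rw [hJw] at this
        funext k
        have hk := congrFun this k
        simp only [Pi.sub_apply, Pi.add_apply, Pi.smul_apply, Pi.zero_apply, smul_eq_mul,
          sub_zero] at hk ⊢
        linear_combination hk
      have E3 : ∀ k, -((Sb.map Complex.ofReal *ᵥ x) k) = γ * w k := by
        intro k
        have hk := congrFun ve3' k
        simp only [Pi.smul_apply, smul_eq_mul] at hk
        rw [hγ, div_mul_eq_mul_div, eq_div_iff hαC]
        linear_combination -hk
      -- assemble block equations
      set y : (Fin N ⊕ Fin q) → ℂ := Sum.elim u w with hy
      have hEm1 : ∀ p, (E.map Complex.ofReal *ᵥ y) p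
          = (A.map Complex.ofReal *ᵥ u) p + (Sbᵀ.map Complex.ofReal *ᵥ w) p := by
        intro p
        unfold Matrix.mulVec dotProduct
        simp only [Fintype.sum_sum_type, Matrix.map_apply, hE, Matrix.fromCols_apply_inl,
          Matrix.fromCols_apply_inr, hy, Sum.elim_inl, Sum.elim_inr]
      have hEmT : ∀ j, (Eᵀ.map Complex.ofReal *ᵥ x) j
          = Sum.elim (fun i => (Aᵀ.map Complex.ofReal *ᵥ x) i)
              (fun k => (Sb.map Complex.ofReal *ᵥ x) k) j := by
        intro j
        rcases j with i | k
        · unfold Matrix.mulVec dotProduct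
          simp only [Matrix.map_apply, Matrix.transpose_apply, hE,
            Matrix.fromCols_apply_inl, Sum.elim_inl]
        · unfold Matrix.mulVec dotProduct
          simp only [Matrix.map_apply, Matrix.transpose_apply, hE,
            Matrix.fromCols_apply_inr, Sum.elim_inr]
      have h1v : Hess.map Complex.ofReal *ᵥ x + E.map Complex.ofReal *ᵥ y = γ • x := by
        funext p
        simp only [Pi.add_apply, Pi.smul_apply, smul_eq_mul]
        rw [hEm1 p]
        exact E1 p
      have h2v : -(Eᵀ.map Complex.ofReal *ᵥ x) = γ • y := by
        funext j
        simp only [Pi.neg_apply, Pi.smul_apply, smul_eq_mul]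
        rw [hEmT j]
        rcases j with i | k
        · simpa [hy] using E2 i
        · simpa [hy] using E3 k
      -- x is nonzero
      have hx0 : x ≠ 0 := by
        intro hxz
        have hEy : E.map Complex.ofReal *ᵥ y = 0 := by
          have h1v' := h1v
          rw [hxz, Matrix.mulVec_zero, smul_zero, zero_add] at h1v'
          exact h1v'
        have hsplit : ∀ (g : ℂ → ℝ), (∀ z1 z2 : ℂ, g (z1 + z2) = g z1 + g z2) → g 0 = 0 →
            (∀ (r : ℝ) (z : ℂ), g ((r : ℂ) * z) = r * g z) →
            (∑ i, (fun i => g (u i)) i • gradVec (hb i) xs)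
              + Sbᵀ *ᵥ (fun k => g (w k)) = 0 := by
          intro g hgadd hg0 hgmul
          funext c
          have hc := congrFun hEy c
          have hc' : g ((E.map Complex.ofReal *ᵥ y) c) = 0 := by rw [hc]; exact hg0
          have hsum : (E.map Complex.ofReal *ᵥ y) c = ∑ j, ((E c j : ℂ) * y j) := rfl
          rw [hsum] at hc'
          have hgsum : ∀ (t : Finset (Fin N ⊕ Fin q)) (F' : (Fin N ⊕ Fin q) → ℂ),
              g (∑ j ∈ t, F' j) = ∑ j ∈ t, g (F' j) := by
            intro t F'
            induction t using Finset.induction with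
            | empty => simpa using hg0
            | insert _ _ hnotmem ih =>
              rw [Finset.sum_insert hnotmem, Finset.sum_insert hnotmem, hgadd, ih]
          rw [hgsum] at hc'
          simp only [Pi.add_apply, Finset.sum_apply, Pi.smul_apply, smul_eq_mul,
            Pi.zero_apply]
          rw [← hc', Fintype.sum_sum_type]
          congr 1
          · refine Finset.sum_congr rfl fun i _ => ?_
            rw [hgmul (E c (Sum.inl i)) (y (Sum.inl i))]
            simp only [hE, hA, Matrix.fromCols_apply_inl, Matrix.of_apply, hy, Sum.elim_inl]
            ring
          · show ∑ k, Sbᵀ c k * g (w k) = _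
            refine Finset.sum_congr rfl fun k _ => ?_
            rw [hgmul (E c (Sum.inr k)) (y (Sum.inr k))]
            simp only [hE, Matrix.fromCols_apply_inr, hy, Sum.elim_inr]
        have hre := hsplit Complex.re (fun a b => by simp) (by simp)
          (fun r z => by simp [Complex.mul_re])
        have him := hsplit Complex.im (fun a b => by simp) (by simp)
          (fun r z => by simp [Complex.mul_im])
        obtain ⟨hur, hswr⟩ := hnull _ _ hre
        obtain ⟨hui, hswi⟩ := hnull _ _ him
        have hJwre : J *ᵥ (fun k => (w k).re) = 0 := by
          funext k
          have := congrFun hJw k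
          have hrw : ((J.map Complex.ofReal *ᵥ w) k).re = (J *ᵥ fun k' => (w k').re) k := by
            show (∑ k', (J k k' : ℂ) * w k').re = _
            rw [Complex.re_sum]
            refine Finset.sum_congr rfl fun k' _ => by simp [Complex.mul_re]
          rw [this] at hrw
          simp only [Pi.zero_apply] at hrw ⊢
          exact hrw.symm
        have hJwim : J *ᵥ (fun k => (w k).im) = 0 := by
          funext k
          have := congrFun hJw k
          have hrw : ((J.map Complex.ofReal *ᵥ w) k).im = (J *ᵥ fun k' => (w k').im) k := by
            show (∑ k', (J k k' : ℂ) * w k').im = _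
            rw [Complex.im_sum]
            refine Finset.sum_congr rfl fun k' _ => by simp [Complex.mul_im]
          rw [this] at hrw
          simp only [Pi.zero_apply] at hrw ⊢
          exact hrw.symm
        have hwr : (fun k => (w k).re) = 0 := by
          rw [← hJfix _ hswr, hJwre]
        have hwi : (fun k => (w k).im) = 0 := by
          rw [← hJfix _ hswi, hJwim]
        apply hv0
        funext j
        rcases j with p | i | k
        · exact congrFun hxz p
        · exact Complex.ext (congrFun hur i) (congrFun hui i)
        · exact Complex.ext (congrFun hwr k) (congrFun hwi k)
      have hγre : 0 < γ.re :=
        eigRe Hess E γ x y hx0 (posdef_complex_re Hess hpd x hx0) h1v h2v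
      -- γ is an eigenvalue of f
      have hvE : v = Sum.elim x y := by
        funext j
        rcases j with p | i | k <;> rfl
      have hCv : (C.map Complex.ofReal) *ᵥ v = γ • v := by
        rw [hvE, hC, Matrix.fromBlocks_map, Matrix.fromBlocks_mulVec]
        have hneg : (-Eᵀ).map Complex.ofReal = -(Eᵀ.map Complex.ofReal) := by
          ext i j; simp [Matrix.map_apply]
        have h0m : (0 : Matrix (Fin N ⊕ Fin q) (Fin N ⊕ Fin q) ℝ).map Complex.ofReal = 0 := by
          ext i j; simp
        rw [hneg, h0m, Matrix.zero_mulVec, add_zero, Matrix.neg_mulVec]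
        funext j
        rcases j with p | j'
        · show (Hess.map Complex.ofReal *ᵥ x + E.map Complex.ofReal *ᵥ y) p = γ • x p
          rw [h1v]; rfl
        · show (-(Eᵀ.map Complex.ofReal *ᵥ x)) j' = γ • y j'
          have := congrFun h2v j'
          simpa using this
      have heig : Module.End.HasEigenvalue f γ := by
        refine Module.End.hasEigenvalue_of_hasEigenvector ⟨?_, hv0⟩
        rw [Module.End.mem_eigenspace_iff]
        show (C.map Complex.ofReal).mulVecLin v = γ • v
        rw [Matrix.mulVecLin_apply]
        exact hCv
      have hmem : γ.re / Complex.normSq γ ∈ s :=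
        Finset.mem_insert_of_mem (Finset.mem_image.mpr
          ⟨γ, Finset.mem_filter.mpr ⟨hfin.mem_toFinset.mpr heig, hγre⟩, rfl⟩)
      have hγ0 : γ ≠ 0 := fun h => by rw [h] at hγre; simp at hγre
      have hnsγ : 0 < Complex.normSq γ := Complex.normSq_pos.mpr hγ0
      have hble : α * Complex.normSq γ ≤ γ.re := by
        have h1 : α ≤ γ.re / Complex.normSq γ := le_trans hαle (Finset.min'_le s _ hmem)
        exact (le_div_iff₀ hnsγ).mp h1
      have hβval : β = 1 - (α : ℂ) * γ := by
        rw [hγ]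
        field_simp
        ring
      have hnormβ : Complex.normSq β = 1 - 2 * (α * γ.re) + α ^ 2 * Complex.normSq γ := by
        rw [hβval]
        simp only [Complex.normSq_apply, Complex.sub_re, Complex.sub_im, Complex.one_re,
          Complex.one_im, Complex.mul_re, Complex.mul_im, Complex.ofReal_re, Complex.ofReal_im]
        ring
      have h5 : α ^ 2 * Complex.normSq γ ≤ α * γ.re := by
        calc α ^ 2 * Complex.normSq γ = α * (α * Complex.normSq γ) := by ring
        _ ≤ α * γ.re := mul_le_mul_of_nonneg_left hble hα.le
      have hlt : Complex.normSq β < 1 := by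
        rw [hnormβ]
        have h6 : 0 < α * γ.re := mul_pos hα hγre
        linarith
      have habs := Complex.sq_norm β
      nlinarith [norm_nonneg β, habs, hlt]
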